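/- Let n ≥ 1, let T₀ > 0, let (a_{αβ})_{α,β=1}^n be a constant symmetric matrix with all entries a_{αβ} > 0, and let (x_α, u_α, T_α) be a differentiable solution of the PB-CS model with T_α(t) > 0 for all α, t. Define the index sets E₊ := {(α,β) ∈ {1,…,n}² : (E_α(0) − E_β(0))(T_β(0) − T_α(0)) > 0} and E₋ := {1,…,n}² \ E₊. If ∑_{(α,β)∈E₊} a_{αβ} (T₀²/(T_α(0) T_β(0))) (E_α(0) − E_β(0))(T_β(0) − T_α(0)) > ∑_{(α,β)∈E₋} a_{αβ} (T₀²/(T_α(0) T_β(0))) (E_β(0) − E_α(0))(T_β(0) − T_α(0)), then (d/dt) ℰ(t)² |_{t=0} > 0. -/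

import Mathlib

open scoped Classical in
theorem stmt16 (n d : ℕ) (hn : 1 ≤ n) (T₀ : ℝ) (hT₀ : 0 < T₀)
    (a : Fin n → Fin n → ℝ) (ha_symm : ∀ α β, a α β = a β α) (ha_pos : ∀ α β, 0 < a α β)
    (x u : Fin n → ℝ → EuclideanSpace ℝ (Fin d)) (T : Fin n → ℝ → ℝ)
    (hTpos : ∀ α t, 0 < T α t)
    (hx : ∀ α t, HasDerivAt (x α) (u α t) t)
    (hu : ∀ α t, HasDerivAt (u α)
      ((T₀ / (n : ℝ)) • ∑ β, a α β • ((T β t)⁻¹ • u β t - (T α t)⁻¹ • u α t)) t)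
    (hT : ∀ α t, HasDerivAt (fun s => T α s + ‖u α s‖ ^ 2 / 2)
      ((T₀ ^ 2 / (n : ℝ)) * ∑ β, a α β * ((T α t)⁻¹ - (T β t)⁻¹)) t)
    (hbig :
      ∑ p ∈ Finset.univ.filter (fun p : Fin n × Fin n =>
          0 < ((T p.1 0 + ‖u p.1 0‖ ^ 2 / 2 - T₀) - (T p.2 0 + ‖u p.2 0‖ ^ 2 / 2 - T₀)) *
            (T p.2 0 - T p.1 0)),
        a p.1 p.2 * (T₀ ^ 2 / (T p.1 0 * T p.2 0)) *
          (((T p.1 0 + ‖u p.1 0‖ ^ 2 / 2 - T₀) - (T p.2 0 + ‖u p.2 0‖ ^ 2 / 2 - T₀)) *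
            (T p.2 0 - T p.1 0)) >
      ∑ p ∈ Finset.univ.filter (fun p : Fin n × Fin n =>
          ¬ 0 < ((T p.1 0 + ‖u p.1 0‖ ^ 2 / 2 - T₀) - (T p.2 0 + ‖u p.2 0‖ ^ 2 / 2 - T₀)) *
            (T p.2 0 - T p.1 0)),
        a p.1 p.2 * (T₀ ^ 2 / (T p.1 0 * T p.2 0)) *
          (((T p.2 0 + ‖u p.2 0‖ ^ 2 / 2 - T₀) - (T p.1 0 + ‖u p.1 0‖ ^ 2 / 2 - T₀)) *
            (T p.2 0 - T p.1 0))) :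
    0 < deriv (fun s => ∑ α, (T α s + ‖u α s‖ ^ 2 / 2 - T₀) ^ 2) 0 := by

  classical
  have hn' : (0:ℝ) < n := by exact_mod_cast hn
  -- abbreviations
  set E : Fin n → ℝ := fun α => T α 0 + ‖u α 0‖ ^ 2 / 2 - T₀ with hEdef
  set F : Fin n → ℝ := fun α => (T₀ ^ 2 / (n : ℝ)) * ∑ β, a α β * ((T α 0)⁻¹ - (T β 0)⁻¹)
    with hFdef
  have hderiv : HasDerivAt (fun s => ∑ α, (T α s + ‖u α s‖ ^ 2 / 2 - T₀) ^ 2)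
      (∑ α, 2 * E α * F α) 0 := by
    apply HasDerivAt.fun_sum
    intro α _
    have h1 : HasDerivAt (fun s => T α s + ‖u α s‖ ^ 2 / 2 - T₀) (F α) 0 :=
      (hT α 0).sub_const T₀
    have h2 := h1.pow 2
    have : ((2:ℕ):ℝ) * (T α 0 + ‖u α 0‖ ^ 2 / 2 - T₀) ^ (2-1) * F α = 2 * E α * F α := by
      simp [hEdef]
    rwa [this] at h2
  rw [hderiv.deriv]
  -- the symmetric pair term
  set term : Fin n × Fin n → ℝ := fun p =>
    a p.1 p.2 * (T₀ ^ 2 / (T p.1 0 * T p.2 0)) * ((E p.1 - E p.2) * (T p.2 0 - T p.1 0))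
    with htermdef
  set g : Fin n × Fin n → ℝ := fun p =>
    2 * T₀ ^ 2 / (n : ℝ) * a p.1 p.2 * E p.1 * ((T p.1 0)⁻¹ - (T p.2 0)⁻¹) with hgdef
  have hsum_g : ∑ α, 2 * E α * F α = ∑ p : Fin n × Fin n, g p := by
    rw [← Finset.univ_product_univ, Finset.sum_product]
    refine Finset.sum_congr rfl fun α _ => ?_
    rw [hFdef]
    simp only [Finset.mul_sum, hgdef]
    refine Finset.sum_congr rfl fun β _ => ?_
    ring
  have hswap : ∑ p : Fin n × Fin n, g p = ∑ p : Fin n × Fin n, g p.swap := by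
    exact Fintype.sum_equiv (Equiv.prodComm _ _) _ _ (fun p => rfl) |>.symm
  have hpair : ∀ p : Fin n × Fin n, g p + g p.swap = (1 / (n:ℝ)) * (2 * term p) := by
    intro p
    have h1 : (T p.1 0) ≠ 0 := (hTpos p.1 0).ne'
    have h2 : (T p.2 0) ≠ 0 := (hTpos p.2 0).ne'
    have hnne : (n:ℝ) ≠ 0 := hn'.ne'
    rw [hgdef, htermdef]
    simp only [Prod.fst_swap, Prod.snd_swap]
    rw [ha_symm p.2 p.1]
    field_simp
    ring
  have hsum_eq : ∑ α, 2 * E α * F α = (1 / (n:ℝ)) * ∑ p : Fin n × Fin n, term p := by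
    have : 2 * ∑ p : Fin n × Fin n, g p
        = ∑ p : Fin n × Fin n, ((1 / (n:ℝ)) * (2 * term p)) := by
      rw [two_mul]
      nth_rewrite 2 [hswap]
      rw [← Finset.sum_add_distrib]
      exact Finset.sum_congr rfl fun p _ => hpair p
    rw [hsum_g]
    have h2 : 2 * ∑ p : Fin n × Fin n, g p
        = 2 * ((1 / (n:ℝ)) * ∑ p : Fin n × Fin n, term p) := by
      rw [this, ← Finset.mul_sum, ← Finset.mul_sum]; ring
    linarith
  rw [hsum_eq]
  have hpos : 0 < ∑ p : Fin n × Fin n, term p := by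
    have hsplit := Finset.sum_filter_add_sum_filter_not (Finset.univ : Finset (Fin n × Fin n))
      (fun p : Fin n × Fin n => 0 < (E p.1 - E p.2) * (T p.2 0 - T p.1 0)) term
    rw [← hsplit]
    have hneg : ∑ p ∈ Finset.univ.filter (fun p : Fin n × Fin n =>
        ¬ 0 < (E p.1 - E p.2) * (T p.2 0 - T p.1 0)), term p
        = - ∑ p ∈ Finset.univ.filter (fun p : Fin n × Fin n =>
            ¬ 0 < (E p.1 - E p.2) * (T p.2 0 - T p.1 0)),
            a p.1 p.2 * (T₀ ^ 2 / (T p.1 0 * T p.2 0)) * ((E p.2 - E p.1) * (T p.2 0 - T p.1 0)) := by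
      rw [← Finset.sum_neg_distrib]
      refine Finset.sum_congr rfl fun p _ => ?_
      rw [htermdef]; ring
    rw [hneg]
    have hbig' := hbig
    simp only [hEdef] at hbig' ⊢
    linarith
  positivity
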